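/- Let S be a real n×m matrix. The following are equivalent: (1) every square submatrix of S (given by injective row and column selections) has signed determinant (is sign nonsingular or sign singular); (2) every cycle of the SR graph G(S) is an o-cycle, i.e., for all r ≥ 2 and all injective a : Fin r → Fin n and b : Fin r → Fin m with S (a j) (b j) ≠ 0 and S (a j) (b (j+1)) ≠ 0 for all j (indices mod r), one has (-1)^r · ∏_j sign(S (a j) (b j)) · sign(S (a j) (b (j+1))) = -1. -/

import Mathlib

namespace SRGraph

variable {n m : ℕ}

/-- A cycle of the SR graph `G(S)`: `r ≥ 2` together with injective maps
`a : Fin r → Fin n` (S-vertices) and `b : Fin r → Fin m` (R-vertices) such that the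
entries `S (a j) (b j)` and `S (a j) (b (j+1))` (indices mod `r`) are all nonzero. -/
def IsCyc (S : Matrix (Fin n) (Fin m) ℝ) {r : ℕ} (a : Fin r → Fin n) (b : Fin r → Fin m) :
    Prop :=
  2 ≤ r ∧ Function.Injective a ∧ Function.Injective b ∧
    (∀ j, S (a j) (b j) ≠ 0) ∧ (∀ j, S (a j) (b (finRotate r j)) ≠ 0)

/-- The parity `P(C) = (-1)^r ∏_j sign(S (a j) (b j)) · sign(S (a j) (b (j+1)))` of a
cycle; the cycle is an e-cycle if this is `1` and an o-cycle if it is `-1`. -/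
noncomputable def parity (S : Matrix (Fin n) (Fin m) ℝ) {r : ℕ}
    (a : Fin r → Fin n) (b : Fin r → Fin m) : ℝ :=
  (-1 : ℝ) ^ r *
    ∏ j : Fin r, Real.sign (S (a j) (b j)) * Real.sign (S (a j) (b (finRotate r j)))

/-- A cycle is an s-cycle when the products of the absolute values of the entries on the
two halves of its disconnecting partition agree. -/
def IsSCyc (S : Matrix (Fin n) (Fin m) ℝ) {r : ℕ} (a : Fin r → Fin n)
    (b : Fin r → Fin m) : Prop :=
  ∏ j : Fin r, |S (a j) (b j)| = ∏ j : Fin r, |S (a j) (b (finRotate r j))|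

/-- The edge set of a cycle: the `2r` pairs `(a j, b j)` and `(a j, b (j+1))`. -/
def cycEdges {r : ℕ} (a : Fin r → Fin n) (b : Fin r → Fin m) : Set (Fin n × Fin m) :=
  {e | ∃ j : Fin r, e = (a j, b j) ∨ e = (a j, b (finRotate r j))}

/-- The vertex set of a cycle inside `Fin n ⊕ Fin m`. -/
def cycVerts {r : ℕ} (a : Fin r → Fin n) (b : Fin r → Fin m) : Set (Fin n ⊕ Fin m) :=
  Set.range (Sum.inl ∘ a) ∪ Set.range (Sum.inr ∘ b)

/-- Adjacency relation on `Fin n ⊕ Fin m` determined by a set `E` of (S,R) edges. -/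
def adjOf (E : Set (Fin n × Fin m)) : (Fin n ⊕ Fin m) → (Fin n ⊕ Fin m) → Prop
  | Sum.inl i, Sum.inr j => (i, j) ∈ E
  | Sum.inr j, Sum.inl i => (i, j) ∈ E
  | _, _ => False

/-- The connected component of `v` in the subgraph with vertex set `V` and edge set `E`. -/
def componentOf (E : Set (Fin n × Fin m)) (V : Set (Fin n ⊕ Fin m))
    (v : Fin n ⊕ Fin m) : Set (Fin n ⊕ Fin m) :=
  {x ∈ V | Relation.ReflTransGen (adjOf E) v x}

/-- Vertex set of an S-to-R path `u 0 – w 0 – u 1 – ⋯ – u p – w p`. -/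
def pathVerts {p : ℕ} (u : Fin (p + 1) → Fin n) (w : Fin (p + 1) → Fin m) :
    Set (Fin n ⊕ Fin m) :=
  Set.range (Sum.inl ∘ u) ∪ Set.range (Sum.inr ∘ w)

/-- Edge set (the `2p+1` pairs `(u i, w i)` and `(u (i+1), w i)`) of an S-to-R path. -/
def pathEdges {p : ℕ} (u : Fin (p + 1) → Fin n) (w : Fin (p + 1) → Fin m) :
    Set (Fin n × Fin m) :=
  {e | ∃ i : Fin (p + 1), e = (u i, w i)} ∪ {e | ∃ i : Fin p, e = (u i.succ, w i.castSucc)}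

/-- The subgraph with (nonempty) vertex set `V` and edge set `E` has all of its connected
components equal to paths joining an S-vertex to an R-vertex. -/
def SRIntersection (V : Set (Fin n ⊕ Fin m)) (E : Set (Fin n × Fin m)) : Prop :=
  V.Nonempty ∧
    ∀ v ∈ V, ∃ (p : ℕ) (u : Fin (p + 1) → Fin n) (w : Fin (p + 1) → Fin m),
      Function.Injective u ∧ Function.Injective w ∧
      pathVerts u w = componentOf E V v ∧
      pathEdges u w = {e ∈ E | Sum.inl e.1 ∈ componentOf E V v}

/-- `G(S)` contains two e-cycles, with distinct edge sets, having S-to-R intersection. -/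
def TwoECyclesWithSRIntersection (S : Matrix (Fin n) (Fin m) ℝ) : Prop :=
  ∃ (r₁ : ℕ) (a₁ : Fin r₁ → Fin n) (b₁ : Fin r₁ → Fin m)
    (r₂ : ℕ) (a₂ : Fin r₂ → Fin n) (b₂ : Fin r₂ → Fin m),
    IsCyc S a₁ b₁ ∧ parity S a₁ b₁ = 1 ∧ IsCyc S a₂ b₂ ∧ parity S a₂ b₂ = 1 ∧
    cycEdges a₁ b₁ ≠ cycEdges a₂ b₂ ∧
    SRIntersection (cycVerts a₁ b₁ ∩ cycVerts a₂ b₂) (cycEdges a₁ b₁ ∩ cycEdges a₂ b₂)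

/-- Condition (*): all e-cycles are s-cycles, and no two e-cycles (with distinct edge
sets) have S-to-R intersection. -/
def ConditionStar (S : Matrix (Fin n) (Fin m) ℝ) : Prop :=
  (∀ (r : ℕ) (a : Fin r → Fin n) (b : Fin r → Fin m),
      IsCyc S a b → parity S a b = 1 → IsSCyc S a b) ∧
  ¬ TwoECyclesWithSRIntersection S

/-- Two real matrices have the same sign pattern. -/
def SameSignPattern {k l : ℕ} (B M : Matrix (Fin k) (Fin l) ℝ) : Prop :=
  ∀ i j, Real.sign (B i j) = Real.sign (M i j)

/-- A square real matrix is sign nonsingular if every matrix with the same sign pattern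
has nonzero determinant. -/
def SignNonsingular {k : ℕ} (M : Matrix (Fin k) (Fin k) ℝ) : Prop :=
  ∀ B : Matrix (Fin k) (Fin k) ℝ, SameSignPattern B M → B.det ≠ 0

/-- A square real matrix is sign singular if every matrix with the same sign pattern has
zero determinant. -/
def SignSingular {k : ℕ} (M : Matrix (Fin k) (Fin k) ℝ) : Prop :=
  ∀ B : Matrix (Fin k) (Fin k) ℝ, SameSignPattern B M → B.det = 0

/-- `S` is strongly sign determined: every square submatrix of `S` is sign nonsingular or
has determinant zero. -/
def SSD (S : Matrix (Fin n) (Fin m) ℝ) : Prop :=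
  ∀ (k : ℕ) (ρ : Fin k → Fin n) (c : Fin k → Fin m),
    Function.Injective ρ → Function.Injective c →
    SignNonsingular (S.submatrix ρ c) ∨ (S.submatrix ρ c).det = 0

end SRGraph


namespace SRGraph

open Equiv Finset

lemma sign_sq {x : ℝ} (h : x ≠ 0) : Real.sign x * Real.sign x = 1 := by
  rcases Real.sign_apply_eq_of_ne_zero x h with h'|h' <;> rw [h'] <;> norm_num

-- key lemma
lemma term_eq_aux (S : Matrix (Fin n) (Fin m) ℝ)
    (hcyc : ∀ (r : ℕ) (a : Fin r → Fin n) (b : Fin r → Fin m),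
      IsCyc S a b → parity S a b = -1)
    {k : ℕ} (ρ : Fin k → Fin n) (c : Fin k → Fin m)
    (hρ : Function.Injective ρ) (hc : Function.Injective c) :
    ∀ (N : ℕ) (σ τ : Equiv.Perm (Fin k)), #(Equiv.Perm.support (σ⁻¹ * τ)) < N →
    (∀ i, S (ρ i) (c (σ i)) ≠ 0) → (∀ i, S (ρ i) (c (τ i)) ≠ 0) →
    ((Equiv.Perm.sign σ : ℤ) : ℝ) * ∏ i, Real.sign (S (ρ i) (c (σ i))) =
    ((Equiv.Perm.sign τ : ℤ) : ℝ) * ∏ i, Real.sign (S (ρ i) (c (τ i))) := by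
  intro N
  induction N with
  | zero => intro σ τ h; omega
  | succ N IH =>
    intro σ τ hN hσ hτ
    by_cases hst : σ = τ
    · rw [hst]
    -- set up the cycle of δ through x
    set δ : Equiv.Perm (Fin k) := σ⁻¹ * τ with hδ
    have hδτ : ∀ y, σ (δ y) = τ y := by
      intro y; simp [hδ, Equiv.Perm.mul_apply]
    have hδne : δ ≠ 1 := by
      intro h
      exact hst (inv_mul_eq_one.mp h)
    obtain ⟨x, hx⟩ : ∃ x, δ x ≠ x := by
      by_contra h
      push_neg at h
      exact hδne (Equiv.ext h)
    set γ : Equiv.Perm (Fin k) := δ.cycleOf x with hγ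
    obtain ⟨s, hs⟩ : ∃ s : Finset (Fin k), s = γ.support := ⟨_, rfl⟩
    obtain ⟨r, hr⟩ : ∃ r : ℕ, r = #s := ⟨_, rfl⟩
    have hmem_s : ∀ y, y ∈ s ↔ δ.SameCycle x y := fun y => by
      rw [hs]; exact Equiv.Perm.mem_support_cycleOf_iff' hx
    have hr2 : 2 ≤ r := by
      rw [hr, hs]; exact Equiv.Perm.two_le_card_support_cycleOf_iff.mpr hx
    have hxs : x ∈ s := (hmem_s x).mpr (Equiv.Perm.SameCycle.refl δ x)
    have hsinv : ∀ y, y ∈ s → δ y ∈ s := by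
      intro y hy
      rw [hmem_s] at hy ⊢
      exact Equiv.Perm.sameCycle_apply_right.mpr hy
    have hco : δ.IsCycleOn s := by
      rw [hs, hγ]; exact δ.isCycleOn_support_cycleOf x
    -- the cycle in the SR graph
    set f : Fin r → Fin k := fun j => (δ ^ (j : ℕ)) x with hf
    have hfs : ∀ j, f j ∈ s := by
      intro j
      rw [hmem_s]
      exact ⟨(j : ℕ), by simp [hf]⟩
    have hpowr : ∀ (nn : ℕ), (δ ^ (nn % r)) x = (δ ^ nn) x := by
      intro nn
      rw [hr, hs, hγ]
      exact Equiv.Perm.pow_mod_card_support_cycleOf_self_apply δ nn x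
    have hfinj : Function.Injective f := by
      have key : ∀ i j : Fin r, (i : ℕ) ≤ (j : ℕ) → f i = f j → i = j := by
        intro i j hle hij
        have h1 : (δ ^ ((j : ℕ) - i)) (f i) = f i :=
          calc (δ ^ ((j : ℕ) - i)) (f i) = (δ ^ ((j : ℕ) - i) * δ ^ (i : ℕ)) x := rfl
          _ = (δ ^ ((j : ℕ) - i + i)) x := by rw [pow_add]
          _ = f j := by rw [Nat.sub_add_cancel hle]
          _ = f i := hij.symm
        have hdvd : #s ∣ ((j : ℕ) - i) := (hco.pow_apply_eq (hfs i)).mp h1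
        rw [← hr] at hdvd
        rcases hdvd with ⟨q, hq⟩
        have hjr : (j : ℕ) < r := j.isLt
        rcases Nat.eq_zero_or_pos q with h|h
        · rw [h, Nat.mul_zero] at hq
          exact Fin.ext (by omega)
        · exfalso
          have : r * 1 ≤ r * q := Nat.mul_le_mul_left r h
          omega
      intro i j hij
      rcases le_total (i : ℕ) (j : ℕ) with h|h
      · exact key i j h hij
      · exact (key j i h hij.symm).symm
    have hrange : Finset.image f univ = s := by
      apply Finset.Subset.antisymm
      · intro y hy
        simp only [Finset.mem_image] at hy
        obtain ⟨j, _, rfl⟩ := hy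
        exact hfs j
      · intro y hy
        obtain ⟨nn, hnr, hny⟩ := hco.exists_pow_eq hxs hy
        rw [← hr] at hnr
        simp only [Finset.mem_image]
        exact ⟨⟨nn, hnr⟩, Finset.mem_univ _, by simpa [hf] using hny⟩
    have hrot : ∀ j : Fin r, f (finRotate r j) = δ (f j) := by
      intro j
      obtain ⟨r', hr'⟩ : ∃ r', r = r' + 1 := ⟨r - 1, by omega⟩
      subst hr'
      have hcast : ((finRotate (r' + 1) j : Fin (r' + 1)) : ℕ) = ((j : ℕ) + 1) % (r' + 1) := by
        rw [finRotate_succ_apply]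
        simp [Fin.add_def]
      simp only [hf, hcast]
      rw [hpowr ((j : ℕ) + 1), pow_succ']
      rfl
    -- the SR cycle
    have hcycle : IsCyc S (ρ ∘ f) (c ∘ σ ∘ f) := by
      refine ⟨hr2, hρ.comp hfinj, hc.comp (σ.injective.comp hfinj), fun j => hσ (f j), ?_⟩
      intro j
      simp only [Function.comp_apply, hrot j, hδτ (f j)]
      exact hτ (f j)
    have hpar : (-1:ℝ)^r * ∏ j : Fin r,
        Real.sign (S (ρ (f j)) (c (σ (f j)))) * Real.sign (S (ρ (f j)) (c (τ (f j)))) = -1 := by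
      have h0 := hcyc r (ρ ∘ f) (c ∘ σ ∘ f) hcycle
      unfold parity at h0
      have heq : ∏ j : Fin r,
          Real.sign (S (ρ (f j)) (c (σ (f j)))) * Real.sign (S (ρ (f j)) (c (τ (f j)))) =
          ∏ j : Fin r, Real.sign (S ((ρ ∘ f) j) ((c ∘ ⇑σ ∘ f) j)) *
            Real.sign (S ((ρ ∘ f) j) ((c ∘ ⇑σ ∘ f) ((finRotate r) j))) := by
        apply Finset.prod_congr rfl
        intro j _
        simp only [Function.comp_apply, hrot j, hδτ (f j)]
      rw [heq]
      exact h0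
    have hprod_orbit : ∏ y ∈ s,
        (Real.sign (S (ρ y) (c (σ y))) * Real.sign (S (ρ y) (c (τ y)))) = (-1 : ℝ) ^ (r + 1) := by
      have himg : ∏ y ∈ s,
          (Real.sign (S (ρ y) (c (σ y))) * Real.sign (S (ρ y) (c (τ y)))) =
          ∏ j : Fin r,
          Real.sign (S (ρ (f j)) (c (σ (f j)))) * Real.sign (S (ρ (f j)) (c (τ (f j)))) := by
        rw [← hrange, Finset.prod_image (fun a _ b _ hab => hfinj hab)]
      rw [himg]
      have hrr : (-1:ℝ)^r * (-1)^r = 1 := by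
        rw [← pow_add]; exact Even.neg_one_pow ⟨r, rfl⟩
      calc (∏ j : Fin r,
          Real.sign (S (ρ (f j)) (c (σ (f j)))) * Real.sign (S (ρ (f j)) (c (τ (f j)))))
          = ((-1:ℝ)^r * (-1)^r) * ∏ j : Fin r,
          Real.sign (S (ρ (f j)) (c (σ (f j)))) * Real.sign (S (ρ (f j)) (c (τ (f j)))) := by
            rw [hrr, one_mul]
        _ = (-1:ℝ)^r * ((-1:ℝ)^r * ∏ j : Fin r,
          Real.sign (S (ρ (f j)) (c (σ (f j)))) * Real.sign (S (ρ (f j)) (c (τ (f j))))) := by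
            ring
        _ = (-1:ℝ)^r * (-1) := by rw [hpar]
        _ = (-1:ℝ)^(r+1) := by rw [pow_succ]
    -- the modified permutation
    set σ' : Equiv.Perm (Fin k) := σ * γ with hσ'def
    have hσ'_on : ∀ y ∈ s, σ' y = τ y := by
      intro y hy
      have hgy : γ y = δ y := Equiv.Perm.SameCycle.cycleOf_apply ((hmem_s y).mp hy)
      show σ (γ y) = τ y
      rw [hgy, hδτ]
    have hσ'_off : ∀ y, y ∉ s → σ' y = σ y := by
      intro y hy
      have hgy : γ y = y :=
        Equiv.Perm.cycleOf_apply_of_not_sameCycle (fun h => hy ((hmem_s y).mpr h))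
      show σ (γ y) = σ y
      rw [hgy]
    have hσ'ne : ∀ i, S (ρ i) (c (σ' i)) ≠ 0 := by
      intro i
      by_cases hi : i ∈ s
      · rw [hσ'_on i hi]; exact hτ i
      · rw [hσ'_off i hi]; exact hσ i
    -- the new difference permutation has smaller support
    have hδ'_on : ∀ y ∈ s, (σ'⁻¹ * τ) y = y := by
      intro y hy
      have : τ y = σ' y := (hσ'_on y hy).symm
      simp [Equiv.Perm.mul_apply, this]
    have hδ'_off : ∀ y, y ∉ s → (σ'⁻¹ * τ) y = δ y := by
      intro y hy
      have hdy : δ y ∉ s := by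
        rw [hmem_s]
        intro h
        exact hy ((hmem_s y).mpr (Equiv.Perm.sameCycle_apply_right.mp h))
      have hgdy : γ (δ y) = δ y :=
        Equiv.Perm.cycleOf_apply_of_not_sameCycle (fun h => hdy ((hmem_s (δ y)).mpr h))
      have hginv : γ⁻¹ (δ y) = δ y := by
        conv_lhs => rw [← hgdy]
        exact γ.symm_apply_apply (δ y)
      show σ'⁻¹ (τ y) = δ y
      rw [hσ'def, mul_inv_rev, Equiv.Perm.mul_apply]
      have : σ⁻¹ (τ y) = δ y := rfl
      rw [this, hginv]
    have hcard : #(Equiv.Perm.support (σ'⁻¹ * τ)) < N := by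
      have hsub : (σ'⁻¹ * τ).support ⊂ δ.support := by
        constructor
        · intro y hy
          rw [Equiv.Perm.mem_support] at hy ⊢
          by_cases hys : y ∈ s
          · exact absurd (hδ'_on y hys) hy
          · rw [hδ'_off y hys] at hy
            exact hy
        · intro hcon
          have hx1 : x ∈ δ.support := Equiv.Perm.mem_support.mpr hx
          have hx2 := hcon hx1
          rw [Equiv.Perm.mem_support] at hx2
          exact hx2 (hδ'_on x hxs)
      have := Finset.card_lt_card hsub
      omega
    have hIH := IH σ' τ hcard hσ'ne hτ
    rw [← hIH]
    -- now compare term σ with term σ'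
    have hsign : ((Equiv.Perm.sign σ' : ℤ) : ℝ) =
        ((Equiv.Perm.sign σ : ℤ) : ℝ) * (-1:ℝ)^(r+1) := by
      have hγc : Equiv.Perm.IsCycle γ := δ.isCycle_cycleOf hx
      have h1 : Equiv.Perm.sign γ = -(-1) ^ r := by
        rw [hγc.sign, ← hs, ← hr]
      have h2 : Equiv.Perm.sign σ' = Equiv.Perm.sign σ * Equiv.Perm.sign γ := by
        rw [hσ'def, map_mul]
      rw [h2, h1]
      push_cast
      ring
    have hprodσ' : ∏ i, Real.sign (S (ρ i) (c (σ' i))) =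
        (∏ i, Real.sign (S (ρ i) (c (σ i)))) * (-1:ℝ)^(r+1) := by
      have e1 : ∀ (g : Fin k → ℝ), ∏ i, g i = (∏ i ∈ s, g i) * ∏ i ∈ sᶜ, g i :=
        fun g => (Finset.prod_mul_prod_compl s g).symm
      rw [e1, e1 (fun i => Real.sign (S (ρ i) (c (σ i))))]
      have e2 : ∏ i ∈ sᶜ, Real.sign (S (ρ i) (c (σ' i))) =
          ∏ i ∈ sᶜ, Real.sign (S (ρ i) (c (σ i))) := by
        apply Finset.prod_congr rfl
        intro i hi
        rw [hσ'_off i (Finset.mem_compl.mp hi)]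
      have e3 : ∏ i ∈ s, Real.sign (S (ρ i) (c (σ' i))) =
          (∏ i ∈ s, Real.sign (S (ρ i) (c (σ i)))) * (-1:ℝ)^(r+1) := by
        rw [← hprod_orbit, ← Finset.prod_mul_distrib]
        apply Finset.prod_congr rfl
        intro i hi
        rw [hσ'_on i hi]
        have := sign_sq (hσ i)
        calc Real.sign (S (ρ i) (c (τ i)))
            = (Real.sign (S (ρ i) (c (σ i))) * Real.sign (S (ρ i) (c (σ i)))) *
              Real.sign (S (ρ i) (c (τ i))) := by rw [this, one_mul]
          _ = Real.sign (S (ρ i) (c (σ i))) *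
              (Real.sign (S (ρ i) (c (σ i))) * Real.sign (S (ρ i) (c (τ i)))) := by ring
      rw [e2, e3]
      ring
    rw [hsign, hprodσ']
    have hrr1 : (-1:ℝ)^(r+1) * (-1:ℝ)^(r+1) = 1 := by
      rw [← pow_add]; exact Even.neg_one_pow ⟨r+1, by ring⟩
    calc ((Equiv.Perm.sign σ : ℤ) : ℝ) * ∏ i, Real.sign (S (ρ i) (c (σ i)))
        = (((Equiv.Perm.sign σ : ℤ) : ℝ) * ∏ i, Real.sign (S (ρ i) (c (σ i)))) *
          ((-1:ℝ)^(r+1) * (-1:ℝ)^(r+1)) := by rw [hrr1, mul_one]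
      _ = ((Equiv.Perm.sign σ : ℤ) : ℝ) * (-1:ℝ)^(r+1) *
          ((∏ i, Real.sign (S (ρ i) (c (σ i)))) * (-1:ℝ)^(r+1)) := by ring


lemma det_eq_sum {k : ℕ} (B : Matrix (Fin k) (Fin k) ℝ) :
    B.det = ∑ σ : Equiv.Perm (Fin k), ((Equiv.Perm.sign σ : ℤ) : ℝ) * ∏ i, B i (σ i) := by
  rw [← Matrix.det_transpose, Matrix.det_apply]
  simp [Matrix.transpose_apply, Units.smul_def, zsmul_eq_mul]

lemma real_sign_mul_abs (x : ℝ) : Real.sign x * |x| = x := by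
  rcases lt_trichotomy x 0 with h|h|h
  · rw [Real.sign_of_neg h, abs_of_neg h]; ring
  · simp [h]
  · rw [Real.sign_of_pos h, abs_of_pos h]; ring

lemma sign_pos_mul_sign {c : ℝ} (hc : 0 < c) (x : ℝ) :
    Real.sign (c * Real.sign x) = Real.sign x := by
  rcases lt_trichotomy x 0 with h|h|h
  · rw [Real.sign_of_neg h, mul_neg_one, Real.sign_of_neg (by linarith)]
  · simp [h, Real.sign_zero]
  · rw [Real.sign_of_pos h, mul_one, Real.sign_of_pos hc]

lemma finRotate_ne {q : ℕ} (hq : 2 ≤ q) (j : Fin q) : finRotate q j ≠ j := by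
  obtain ⟨q', rfl⟩ : ∃ q', q = q' + 1 := ⟨q - 1, by omega⟩
  rw [finRotate_succ_apply]
  intro h
  have h1 : (1 : Fin (q' + 1)) = 0 := by
    have := congrArg (· - j) h
    simpa [add_sub_cancel_left, sub_self, add_comm] using this
  have h2 : ((1 : Fin (q' + 1)) : ℕ) = ((0 : Fin (q' + 1)) : ℕ) := congrArg Fin.val h1
  rw [Fin.val_zero, Fin.val_one'] at h2
  rw [Nat.mod_eq_of_lt (by omega)] at h2
  omega

open Fin.NatCast in
lemma perm_eq_one_or_rot {q : ℕ} (hq : 2 ≤ q) (σ : Equiv.Perm (Fin q))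
    (h : ∀ j, σ j = j ∨ σ j = finRotate q j) : σ = 1 ∨ σ = finRotate q := by
  obtain ⟨q', rfl⟩ : ∃ q', q = q' + 1 := ⟨q - 1, by omega⟩
  by_cases hall : ∀ j, σ j = j
  · left; exact Equiv.ext hall
  push_neg at hall
  obtain ⟨j₀, hj₀⟩ := hall
  have hj₀' : σ j₀ = j₀ + 1 := by
    rcases h j₀ with h'|h'
    · exact absurd h' hj₀
    · rwa [finRotate_succ_apply] at h'
  have step : ∀ j : Fin (q' + 1), σ j = j + 1 → σ (j + 1) = j + 1 + 1 := by
    intro j hj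
    rcases h (j + 1) with h'|h'
    · exfalso
      have h2 : j = j + 1 := σ.injective (hj.trans h'.symm)
      exact finRotate_ne hq (j) (by rw [finRotate_succ_apply]; exact h2.symm)
    · rwa [finRotate_succ_apply] at h'
  have hall' : ∀ kk : ℕ, σ (j₀ + (kk : Fin (q' + 1))) = j₀ + (kk : Fin (q' + 1)) + 1 := by
    intro kk
    induction kk with
    | zero => simpa using hj₀'
    | succ kk ih =>
      have hc : ((kk + 1 : ℕ) : Fin (q' + 1)) = (kk : Fin (q' + 1)) + 1 := by
        push_cast; ring
      rw [hc, ← add_assoc]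
      exact step _ ih
  right
  apply Equiv.ext
  intro j
  have hrep : j₀ + (((j - j₀ : Fin (q' + 1)) : ℕ) : Fin (q' + 1)) = j := by
    rw [Fin.cast_val_eq_self]
    abel
  have := hall' ((j - j₀ : Fin (q' + 1)) : ℕ)
  rw [hrep] at this
  rw [finRotate_succ_apply]
  exact this

noncomputable def auxB {q : ℕ} (M : Matrix (Fin q) (Fin q) ℝ) (p : ℝ × ℝ) :
    Matrix (Fin q) (Fin q) ℝ :=
  fun j j' => (if j' = j then p.2 else if j' = finRotate q j then 1 else p.1) * Real.sign (M j j')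

lemma auxB_cont {q : ℕ} (M : Matrix (Fin q) (Fin q) ℝ) :
    Continuous fun p => (auxB M p).det := by
  apply Continuous.matrix_det
  apply continuous_matrix
  intro i j
  unfold auxB
  split_ifs <;> fun_prop

lemma auxB_det₀ {q : ℕ} (hq : 2 ≤ q) (M : Matrix (Fin q) (Fin q) ℝ) (t : ℝ) :
    (auxB M (0, t)).det =
      t ^ q * (∏ j, Real.sign (M j j)) +
      ((Equiv.Perm.sign (finRotate q) : ℤ) : ℝ) * ∏ j, Real.sign (M j (finRotate q j)) := by
  obtain ⟨q', rfl⟩ : ∃ q', q = q' + 1 := ⟨q - 1, by omega⟩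
  rw [det_eq_sum]
  rw [Finset.sum_eq_add_of_mem (1 : Equiv.Perm (Fin (q' + 1))) (finRotate (q' + 1))
    (Finset.mem_univ _) (Finset.mem_univ _)
    (by
      intro h
      have := congrArg (fun σ : Equiv.Perm (Fin (q' + 1)) => σ 0) h
      exact finRotate_ne hq 0 this.symm)
    ?_]
  · congr 1
    · simp only [Equiv.Perm.sign_one, Units.val_one, Int.cast_one, one_mul, Equiv.Perm.one_apply]
      rw [show (∏ i, auxB M (0, t) i i) = ∏ i, t * Real.sign (M i i) from
        Finset.prod_congr rfl (fun i _ => by simp [auxB])]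
      rw [Finset.prod_mul_distrib, Finset.prod_const]
      simp
    · congr 1
      apply Finset.prod_congr rfl
      intro i _
      have hne := finRotate_ne hq i
      show (if finRotate (q' + 1) i = i then t
          else if finRotate (q' + 1) i = finRotate (q' + 1) i then 1 else 0) *
          Real.sign (M i (finRotate (q' + 1) i)) = Real.sign (M i (finRotate (q' + 1) i))
      rw [if_neg hne, if_pos rfl, one_mul]
  · rintro σ hσ ⟨h1, h2⟩
    have : ∃ j, σ j ≠ j ∧ σ j ≠ finRotate (q' + 1) j := by
      by_contra hcon
      push_neg at hcon
      have : ∀ j, σ j = j ∨ σ j = finRotate (q' + 1) j := by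
        intro j
        by_cases hj : σ j = j
        · exact Or.inl hj
        · exact Or.inr (hcon j hj)
      rcases perm_eq_one_or_rot hq σ this with h|h
      · exact h1 h
      · exact h2 h
    obtain ⟨j, hj1, hj2⟩ := this
    have : auxB M (0, t) j (σ j) = 0 := by
      show (if σ j = j then t else if σ j = finRotate (q' + 1) j then 1 else 0) *
          Real.sign (M j (σ j)) = 0
      rw [if_neg hj1, if_neg hj2, zero_mul]
    rw [Finset.prod_eq_zero (Finset.mem_univ j) this, mul_zero]

lemma parity_pm (S : Matrix (Fin n) (Fin m) ℝ) {r : ℕ} (a : Fin r → Fin n)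
    (b : Fin r → Fin m) (h : IsCyc S a b) : parity S a b = 1 ∨ parity S a b = -1 := by
  apply mul_self_eq_one_iff.mp
  obtain ⟨hr2, ha, hb, hD, hE⟩ := h
  unfold parity
  have h1 : ((-1:ℝ)^r) * ((-1:ℝ)^r) = 1 := by
    rw [← pow_add]; exact Even.neg_one_pow ⟨r, rfl⟩
  have h2 : (∏ j : Fin r, Real.sign (S (a j) (b j)) *
        Real.sign (S (a j) (b (finRotate r j)))) *
      (∏ j : Fin r, Real.sign (S (a j) (b j)) *
        Real.sign (S (a j) (b (finRotate r j)))) = 1 := by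
    rw [← Finset.prod_mul_distrib]
    apply Finset.prod_eq_one
    intro j _
    have d := sign_sq (hD j)
    have e := sign_sq (hE j)
    calc (Real.sign (S (a j) (b j)) * Real.sign (S (a j) (b (finRotate r j)))) *
        (Real.sign (S (a j) (b j)) * Real.sign (S (a j) (b (finRotate r j))))
        = (Real.sign (S (a j) (b j)) * Real.sign (S (a j) (b j))) *
          (Real.sign (S (a j) (b (finRotate r j))) *
           Real.sign (S (a j) (b (finRotate r j)))) := by ring
      _ = 1 := by rw [d, e, mul_one]
  calc ((-1:ℝ)^r * ∏ j : Fin r, Real.sign (S (a j) (b j)) *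
        Real.sign (S (a j) (b (finRotate r j)))) *
      ((-1:ℝ)^r * ∏ j : Fin r, Real.sign (S (a j) (b j)) *
        Real.sign (S (a j) (b (finRotate r j))))
      = ((-1:ℝ)^r * (-1:ℝ)^r) * ((∏ j : Fin r, Real.sign (S (a j) (b j)) *
        Real.sign (S (a j) (b (finRotate r j)))) *
        (∏ j : Fin r, Real.sign (S (a j) (b j)) *
        Real.sign (S (a j) (b (finRotate r j))))) := by ring
    _ = 1 := by rw [h1, h2, mul_one]

lemma auxB_pattern {q : ℕ} (M : Matrix (Fin q) (Fin q) ℝ) {ε t : ℝ}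
    (hε : 0 < ε) (ht : 0 < t) : SameSignPattern (auxB M (ε, t)) M := by
  intro i j
  show Real.sign ((if j = i then t else if j = finRotate q i then 1 else ε) *
      Real.sign (M i j)) = Real.sign (M i j)
  split_ifs
  · exact sign_pos_mul_sign ht _
  · exact sign_pos_mul_sign one_pos _
  · exact sign_pos_mul_sign hε _

lemma mpr_dir (S : Matrix (Fin n) (Fin m) ℝ)
    (hcyc : ∀ (r : ℕ) (a : Fin r → Fin n) (b : Fin r → Fin m),
      IsCyc S a b → parity S a b = -1)
    (k : ℕ) (ρ : Fin k → Fin n) (c : Fin k → Fin m)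
    (hρ : Function.Injective ρ) (hc : Function.Injective c) :
    SignNonsingular (S.submatrix ρ c) ∨ SignSingular (S.submatrix ρ c) := by
  by_cases hex : ∃ σ : Equiv.Perm (Fin k), ∀ i, S (ρ i) (c (σ i)) ≠ 0
  · obtain ⟨σ₀, hσ₀⟩ := hex
    left
    intro B hB
    have hBM : ∀ i j, Real.sign (B i j) = Real.sign (S (ρ i) (c j)) := hB
    set ε₀ : ℝ := ((Equiv.Perm.sign σ₀ : ℤ) : ℝ) * ∏ i, Real.sign (S (ρ i) (c (σ₀ i)))
      with hε₀
    have hdet : B.det = ε₀ * ∑ σ : Equiv.Perm (Fin k), ∏ i, |B i (σ i)| := by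
      rw [det_eq_sum, Finset.mul_sum]
      apply Finset.sum_congr rfl
      intro σ _
      have hterm : ∏ i, B i (σ i) =
          (∏ i, Real.sign (S (ρ i) (c (σ i)))) * ∏ i, |B i (σ i)| := by
        rw [← Finset.prod_mul_distrib]
        apply Finset.prod_congr rfl
        intro i _
        rw [← hBM i (σ i), real_sign_mul_abs]
      by_cases hσ : ∀ i, S (ρ i) (c (σ i)) ≠ 0
      · have hte := term_eq_aux S hcyc ρ c hρ hc
          (#(Equiv.Perm.support (σ⁻¹ * σ₀)) + 1) σ σ₀ (by omega) hσ hσ₀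
        rw [hterm, ← mul_assoc, hte, ← hε₀]
      · push_neg at hσ
        obtain ⟨i, hi⟩ := hσ
        have hBz : B i (σ i) = 0 := by
          have : Real.sign (B i (σ i)) = 0 := by rw [hBM, hi, Real.sign_zero]
          exact Real.sign_eq_zero_iff.mp this
        rw [Finset.prod_eq_zero (Finset.mem_univ i) hBz,
          Finset.prod_eq_zero (Finset.mem_univ i) (by rw [hBz, abs_zero]), mul_zero, mul_zero]
    rw [hdet]
    apply mul_ne_zero
    · apply mul_ne_zero
      · have h0 : ((Equiv.Perm.sign σ₀ : ℤ)) ≠ 0 := by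
          rcases Int.units_eq_one_or (Equiv.Perm.sign σ₀) with h|h <;> rw [h] <;> norm_num
        exact_mod_cast h0
      · rw [Finset.prod_ne_zero_iff]
        intro i _
        rw [Ne, Real.sign_eq_zero_iff]
        exact hσ₀ i
    · refine ne_of_gt (Finset.sum_pos' (fun σ _ => Finset.prod_nonneg fun i _ => abs_nonneg _)
        ⟨σ₀, Finset.mem_univ _, Finset.prod_pos fun i _ => ?_⟩)
      rw [abs_pos]
      intro h0
      have : Real.sign (S (ρ i) (c (σ₀ i))) = 0 := by rw [← hBM, h0, Real.sign_zero]
      exact hσ₀ i (Real.sign_eq_zero_iff.mp this)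
  · right
    intro B hB
    push_neg at hex
    rw [det_eq_sum]
    apply Finset.sum_eq_zero
    intro σ _
    obtain ⟨i, hi⟩ := hex σ
    have hBz : B i (σ i) = 0 := by
      have hBM : ∀ i j, Real.sign (B i j) = Real.sign (S (ρ i) (c j)) := hB
      have : Real.sign (B i (σ i)) = 0 := by rw [hBM, hi, Real.sign_zero]
      exact Real.sign_eq_zero_iff.mp this
    rw [Finset.prod_eq_zero (Finset.mem_univ i) hBz, mul_zero]

lemma mp_dir (S : Matrix (Fin n) (Fin m) ℝ)
    (h1 : ∀ (k : ℕ) (ρ : Fin k → Fin n) (c : Fin k → Fin m),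
      Function.Injective ρ → Function.Injective c →
      SignNonsingular (S.submatrix ρ c) ∨ SignSingular (S.submatrix ρ c)) :
    ∀ (r : ℕ) (a : Fin r → Fin n) (b : Fin r → Fin m), IsCyc S a b → parity S a b = -1 := by
  intro r a b hCyc
  by_cases hpar : parity S a b = -1
  · exact hpar
  exfalso
  have hpar1 : parity S a b = 1 := (parity_pm S a b hCyc).resolve_right hpar
  obtain ⟨hr2, ha, hb, hD, hE⟩ := hCyc
  obtain ⟨r', rfl⟩ : ∃ r', r = r' + 1 := ⟨r - 1, by omega⟩
  set M := S.submatrix a b with hM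
  set A := ∏ j, Real.sign (M j j) with hA
  set C := ∏ j, Real.sign (M j (finRotate (r' + 1) j)) with hC2
  have hA2 : A * A = 1 := by
    rw [hA, ← Finset.prod_mul_distrib]
    exact Finset.prod_eq_one fun j _ => sign_sq (hD j)
  have hCC : C * C = 1 := by
    rw [hC2, ← Finset.prod_mul_distrib]
    exact Finset.prod_eq_one fun j _ => sign_sq (hE j)
  have hAC : (-1:ℝ)^(r'+1) * (A * C) = 1 := by
    rw [hA, hC2, ← Finset.prod_mul_distrib]
    exact hpar1
  have hkey : (-1:ℝ)^r' * C = -A := by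
    have hA1 := mul_self_eq_one_iff.mp hA2
    have hC1 := mul_self_eq_one_iff.mp hCC
    have hE1 : (-1:ℝ)^r' = 1 ∨ (-1:ℝ)^r' = -1 := by
      rcases Nat.even_or_odd r' with h|h
      · left; exact Even.neg_one_pow h
      · right; exact Odd.neg_one_pow h
    rw [pow_succ] at hAC
    rcases hA1 with h|h <;> rcases hC1 with h'|h' <;> rcases hE1 with h''|h'' <;>
      rw [h, h', h''] at hAC ⊢ <;> norm_num at hAC <;> norm_num
  have hsignrot : ((Equiv.Perm.sign (finRotate (r' + 1)) : ℤ) : ℝ) = (-1:ℝ)^r' := by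
    rw [sign_finRotate]
    push_cast
    ring
  have hdet0 : ∀ t : ℝ, (auxB M (0, t)).det = A * t^(r'+1) - A := by
    intro t
    rw [auxB_det₀ (by omega) M t, hsignrot, ← hA, ← hC2, hkey]
    ring
  set g : ℝ × ℝ → ℝ := fun p => (auxB M p).det with hg
  have hgc : Continuous g := auxB_cont M
  have h2q : (1:ℝ) < 2^(r'+1) := one_lt_pow₀ (by norm_num) (Nat.succ_ne_zero r')
  have hhq : ((1:ℝ)/2)^(r'+1) < 1 := pow_lt_one₀ (by norm_num) (by norm_num) (Nat.succ_ne_zero r')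
  have hUopen : IsOpen {ε : ℝ | 0 < A * g (ε, 2) ∧ A * g (ε, (1/2 : ℝ)) < 0} := by
    have c1 : Continuous fun ε : ℝ => A * g (ε, 2) :=
      continuous_const.mul (hgc.comp (continuous_id.prodMk continuous_const))
    have c2 : Continuous fun ε : ℝ => A * g (ε, (1/2 : ℝ)) :=
      continuous_const.mul (hgc.comp (continuous_id.prodMk continuous_const))
    exact (isOpen_lt continuous_const c1).inter (isOpen_lt c2 continuous_const)
  have h0mem : (0:ℝ) ∈ {ε : ℝ | 0 < A * g (ε, 2) ∧ A * g (ε, (1/2 : ℝ)) < 0} := by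
    constructor
    · show 0 < A * (auxB M ((0:ℝ), (2:ℝ))).det
      rw [hdet0 2]
      have he : A * (A * 2^(r'+1) - A) = A * A * (2^(r'+1) - 1) := by ring
      rw [he, hA2, one_mul]
      linarith
    · show A * (auxB M ((0:ℝ), (1/2 : ℝ))).det < 0
      rw [hdet0 (1/2)]
      have he : A * (A * (1/2:ℝ)^(r'+1) - A) = A * A * ((1/2:ℝ)^(r'+1) - 1) := by ring
      rw [he, hA2, one_mul]
      linarith
  obtain ⟨d, hd, hball⟩ := Metric.isOpen_iff.mp hUopen 0 h0mem
  have hεmem : (d/2) ∈ {ε : ℝ | 0 < A * g (ε, 2) ∧ A * g (ε, (1/2 : ℝ)) < 0} := by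
    apply hball
    rw [Metric.mem_ball, Real.dist_eq, sub_zero, abs_of_pos (by linarith)]
    linarith
  obtain ⟨hgt, hlt⟩ := hεmem
  have hφc : ContinuousOn (fun t : ℝ => A * g (d/2, t)) (Set.Icc (1/2 : ℝ) 2) :=
    (continuous_const.mul (hgc.comp (continuous_const.prodMk continuous_id))).continuousOn
  have h0Icc : (0:ℝ) ∈ Set.Icc (A * g (d/2, 1/2)) (A * g (d/2, 2)) := ⟨le_of_lt hlt, le_of_lt hgt⟩
  obtain ⟨t₀, ht₀I, ht₀⟩ := intermediate_value_Icc (by norm_num : (1/2:ℝ) ≤ 2) hφc h0Icc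
  have ht₀pos : (0:ℝ) < t₀ := lt_of_lt_of_le (by norm_num) ht₀I.1
  have hgz : g (d/2, t₀) = 0 := by
    have hh : A * (A * g (d/2, t₀)) = g (d/2, t₀) := by rw [← mul_assoc, hA2, one_mul]
    rw [← hh]
    have : A * g (d/2, t₀) = 0 := ht₀
    rw [this, mul_zero]
  rcases h1 (r'+1) a b ha hb with hsns|hss
  · exact hsns (auxB M (d/2, t₀)) (auxB_pattern M (by linarith) ht₀pos) hgz
  · have hz : g (d/2, 2) = 0 := hss (auxB M (d/2, 2)) (auxB_pattern M (by linarith) (by norm_num))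
    rw [hz, mul_zero] at hgt
    exact lt_irrefl 0 hgt

end SRGraph

open SRGraph in
/-- For a real `n×m` matrix `S`, the following are equivalent: (1) every square submatrix
of `S` (given by injective row and column selections) has signed determinant (is sign
nonsingular or sign singular); (2) every cycle of the SR graph `G(S)` is an o-cycle. -/
theorem signedDet_iff_all_o_cycles {n m : ℕ} (S : Matrix (Fin n) (Fin m) ℝ) :
    (∀ (k : ℕ) (ρ : Fin k → Fin n) (c : Fin k → Fin m),
      Function.Injective ρ → Function.Injective c →
      SignNonsingular (S.submatrix ρ c) ∨ SignSingular (S.submatrix ρ c)) ↔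
    (∀ (r : ℕ) (a : Fin r → Fin n) (b : Fin r → Fin m),
      IsCyc S a b → parity S a b = -1) := by
  constructor
  · intro h1
    exact SRGraph.mp_dir S h1
  · intro h2 k ρ c hρ hc
    exact SRGraph.mpr_dir S h2 k ρ c hρ hc
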